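/- If V ≥ δ > 0 on Ω and the symbol P₀(ξ) is bounded below on ℝⁿ, then there exists λ₀ ∈ ℝ such that for all φ ∈ C₀^∞(Ω), the quadratic form B_{λ₀}(φ,φ) = ⟨(1/V)(P₀−λ₀)φ, (P₀+V−λ₀)φ⟩_{L²} satisfies B_{λ₀}(φ,φ) ≥ (C₀/2)‖P₀φ‖²_{L²}, where C₀ = inf_Ω (1/V) > 0. -/

import Mathlib

/- If V ≥ δ > 0 (so that multiplication W by 1/V satisfies ⟨Wf,f⟩ ≥ C₀‖f‖² with
   C₀ = inf 1/V > 0) and the symbol of P₀ is bounded below (⟨P₀φ,φ⟩ ≥ −C‖φ‖²),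
   then there is λ₀ ∈ ℝ such that the quadratic form
   B_{λ₀}(φ,φ) = ⟨(1/V)(P₀−λ₀)φ, (P₀+V−λ₀)φ⟩ satisfies
   B_{λ₀}(φ,φ) ≥ (C₀/2)‖P₀φ‖² for all φ. -/
theorem stmt2 {E : Type*} [NormedAddCommGroup E] [InnerProductSpace ℂ E]
    (P₀ W V : E →ₗ[ℂ] E) (C₀ C : ℝ) (hC₀ : 0 < C₀) (hC : 0 ≤ C)
    (hWsym : ∀ f g : E, (inner ℂ (W f) g : ℂ) = inner ℂ f (W g))
    (hWV : ∀ f : E, W (V f) = f)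
    (hWlow : ∀ f : E, C₀ * ‖f‖ ^ 2 ≤ (inner ℂ (W f) f : ℂ).re)
    (hPlow : ∀ f : E, -C * ‖f‖ ^ 2 ≤ (inner ℂ (P₀ f) f : ℂ).re) :
    ∃ lam₀ : ℝ, ∀ φ : E,
      C₀ / 2 * ‖P₀ φ‖ ^ 2 ≤
        (inner ℂ (W (P₀ φ - (lam₀ : ℂ) • φ)) (P₀ φ + V φ - (lam₀ : ℂ) • φ) : ℂ).re := by
  obtain ⟨μ, hμ⟩ : ∃ μ : ℝ, μ = 2 * C + 1 / C₀ := ⟨_, rfl⟩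
  have hμpos : 0 < μ := by rw [hμ]; positivity
  refine ⟨-μ, fun φ => ?_⟩
  obtain ⟨u, hu⟩ : ∃ u : E, u = P₀ φ + (μ : ℂ) • φ := ⟨_, rfl⟩
  have hsub : P₀ φ - ((-μ : ℝ) : ℂ) • φ = u := by
    rw [hu]; push_cast; module
  have hsub2 : P₀ φ + V φ - ((-μ : ℝ) : ℂ) • φ = u + V φ := by
    rw [hu]; push_cast; module
  rw [hsub, hsub2]
  have hB : (inner ℂ (W u) (u + V φ) : ℂ) = inner ℂ (W u) u + inner ℂ u φ := by
    rw [inner_add_right, hWsym u (V φ), hWV]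
  have hlow : C₀ * ‖u‖ ^ 2 ≤ (inner ℂ (W u) u : ℂ).re := hWlow u
  have hnorm : ‖u‖ ^ 2 =
      ‖P₀ φ‖ ^ 2 + 2 * (μ * (inner ℂ (P₀ φ) φ : ℂ).re) + μ ^ 2 * ‖φ‖ ^ 2 := by
    rw [hu, @norm_add_sq ℂ, inner_smul_right, norm_smul]
    simp [Complex.norm_real, abs_of_pos hμpos, mul_pow]
  have hre : (inner ℂ u φ : ℂ).re = (inner ℂ (P₀ φ) φ : ℂ).re + μ * ‖φ‖ ^ 2 := by
    rw [hu, inner_add_left, inner_smul_left, inner_self_eq_norm_sq_to_K]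
    simp [Complex.conj_ofReal, Complex.mul_re]
    left; norm_cast
  have ht := hPlow φ
  have hb : (0:ℝ) ≤ ‖φ‖ ^ 2 := by positivity
  have hCCb : C₀ * μ * (μ - 2 * C) * ‖φ‖ ^ 2 = μ * ‖φ‖ ^ 2 := by
    have hCC : C₀ * μ * (μ - 2 * C) = μ := by
      rw [show μ - 2 * C = 1 / C₀ by rw [hμ]; ring]; field_simp
    rw [hCC]
  have h2C : 0 ≤ 2 * μ - C := by
    have : 0 < 1 / C₀ := by positivity
    simp only [hμ]; linarith
  have htmul : (2 * C₀ * μ + 1) * (-C * ‖φ‖ ^ 2) ≤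
      (2 * C₀ * μ + 1) * (inner ℂ (P₀ φ) φ : ℂ).re :=
    mul_le_mul_of_nonneg_left ht (by positivity)
  have hlow' : C₀ * (‖P₀ φ‖ ^ 2 + 2 * (μ * (inner ℂ (P₀ φ) φ : ℂ).re) +
      μ ^ 2 * ‖φ‖ ^ 2) ≤ (inner ℂ (W u) u : ℂ).re := by rw [← hnorm]; exact hlow
  have ha : (0:ℝ) ≤ ‖P₀ φ‖ ^ 2 := by positivity
  rw [hB, Complex.add_re, hre]
  nlinarith [mul_nonneg h2C hb, hlow', htmul, hCCb, mul_nonneg hC₀.le ha]
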